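/- Let p_2(z, z̄) be a real homogeneous polynomial of degree 2k (k ≥ 1) on ℂ with no harmonic terms (no monomials z^a or z̄^b alone), written p_2 = ∑_{j=-k+1}^{k-1} C_j z^{k+j} z̄^{k-j}, and suppose ∂_z ∂_z̄ p_2 ≥ 0 everywhere and p_2 ≢ 0. Then C_0 > 0 and for every j ≠ 0, |C_j| ≤ (k²/(k²-j²)) C_0 < k·C_0. -/

import Mathlib

open Complex Finset

/-- Let `p₂ = ∑_{j=-k+1}^{k-1} C_j z^{k+j} z̄^{k-j}` be a real homogeneous
polynomial of degree `2k` (`k ≥ 1`) on `ℂ` with no harmonic terms, such that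
`∂_z ∂_z̄ p₂ ≥ 0` everywhere and `p₂ ≢ 0`. Then `C_0 > 0` and for every `j ≠ 0`,
`|C_j| ≤ (k²/(k²-j²)) C_0 < k C_0`. -/
theorem stmt_7 (k : ℕ) (hk : 1 ≤ k) (C : ℤ → ℂ)
    (hreal : ∀ j : ℤ, C (-j) = starRingEnd ℂ (C j))
    (hnonneg : ∀ z : ℂ, 0 ≤ (∑ j ∈ Finset.Icc (-(k : ℤ) + 1) ((k : ℤ) - 1),
      C j * ((((k : ℤ) + j) * ((k : ℤ) - j) : ℤ) : ℂ) *
        z ^ ((k : ℤ) + j - 1).toNat * (starRingEnd ℂ z) ^ ((k : ℤ) - j - 1).toNat).re)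
    (hne : ∃ z : ℂ, (∑ j ∈ Finset.Icc (-(k : ℤ) + 1) ((k : ℤ) - 1),
      C j * z ^ ((k : ℤ) + j).toNat * (starRingEnd ℂ z) ^ ((k : ℤ) - j).toNat) ≠ 0) :
    0 < (C 0).re ∧ ∀ j : ℤ, j ≠ 0 → |j| ≤ (k : ℤ) - 1 →
      ‖C j‖ ≤ ((k : ℝ) ^ 2 / ((k : ℝ) ^ 2 - (j : ℝ) ^ 2)) * (C 0).re ∧
      ((k : ℝ) ^ 2 / ((k : ℝ) ^ 2 - (j : ℝ) ^ 2)) * (C 0).re < (k : ℝ) * (C 0).re := by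
  classical
  set s : Finset ℤ := Finset.Icc (-(k : ℤ) + 1) ((k : ℤ) - 1) with hs
  set N : ℕ := 2 * k - 1 with hNdef
  have hN0 : 0 < N := by omega
  have hNZ : (N : ℤ) = 2 * (k : ℤ) - 1 := by push_cast [hNdef]; omega
  set ω : ℂ := Complex.exp (2 * Real.pi * I / N) with hωdef
  have hprim : IsPrimitiveRoot ω N := Complex.isPrimitiveRoot_exp N hN0.ne'
  have hωabs : ‖ω‖ = 1 := by
    have h1 : (2 * (Real.pi : ℂ) * I / (N : ℂ)) = ((2 * Real.pi / N : ℝ) : ℂ) * I := by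
      push_cast; ring
    rw [hωdef, h1, Complex.norm_exp_ofReal_mul_I]
  have hωne : ω ≠ 0 := Complex.exp_ne_zero _
  -- geometric sum lemma
  have hgeom : ∀ t : ℤ, t ≠ 0 → t.natAbs < N → ∑ m ∈ Finset.range N, ω ^ (t * m) = 0 := by
    intro t ht htN
    have hω1 : ω ^ t ≠ 1 := by
      intro hdvd
      rw [hprim.zpow_eq_one_iff_dvd, Int.natCast_dvd] at hdvd
      exact absurd (Nat.le_of_dvd (Int.natAbs_pos.mpr ht) hdvd) (by omega)
    have hconv : ∀ m ∈ Finset.range N, ω ^ (t * m) = (ω ^ t) ^ m := by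
      intro m _; rw [zpow_mul, zpow_natCast]
    rw [Finset.sum_congr rfl hconv, geom_sum_eq hω1]
    have : (ω ^ t) ^ N = 1 := by
      rw [← zpow_natCast (ω ^ t) N, ← zpow_mul, mul_comm, zpow_mul, zpow_natCast,
        hprim.pow_eq_one, one_zpow]
    rw [this, sub_self, zero_div]
  -- the sample points
  set zt : ℕ → ℂ := fun m => Complex.exp (Real.pi * I * m / N) with hzt
  set F : ℤ → ℂ := fun j => C j * ((((k : ℤ) + j) * ((k : ℤ) - j) : ℤ) : ℂ) with hF
  set R : ℕ → ℂ := fun m => ∑ j ∈ s,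
      C j * ((((k : ℤ) + j) * ((k : ℤ) - j) : ℤ) : ℂ) *
        (zt m) ^ ((k : ℤ) + j - 1).toNat * (starRingEnd ℂ (zt m)) ^ ((k : ℤ) - j - 1).toNat
    with hR
  have hRre : ∀ m, 0 ≤ (R m).re := fun m => hnonneg (zt m)
  have hconj_zt : ∀ m : ℕ, starRingEnd ℂ (zt m) = (zt m)⁻¹ := by
    intro m
    rw [hzt, ← Complex.exp_conj, ← Complex.exp_neg]
    congr 1
    simp [map_div₀, Complex.conj_I]
    ring
  -- representation of R m
  have hRrep : ∀ m : ℕ, R m = ∑ j ∈ s, F j * ω ^ (j * m) := by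
    intro m
    rw [hR]
    refine Finset.sum_congr rfl fun j hj => ?_
    rw [hs, Finset.mem_Icc] at hj
    have h1 : (0:ℤ) ≤ (k : ℤ) + j - 1 := by omega
    have h2 : (0:ℤ) ≤ (k : ℤ) - j - 1 := by omega
    have hz0 : zt m ≠ 0 := Complex.exp_ne_zero _
    have hpow : (zt m) ^ ((k : ℤ) + j - 1).toNat *
        (starRingEnd ℂ (zt m)) ^ ((k : ℤ) - j - 1).toNat = ω ^ (j * m) := by
      rw [hconj_zt, inv_pow, ← zpow_natCast (zt m), ← zpow_natCast (zt m) (((k : ℤ) - j - 1).toNat),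
        ← zpow_neg, ← zpow_add₀ hz0, Int.toNat_of_nonneg h1, Int.toNat_of_nonneg h2]
      have hexp : (k : ℤ) + j - 1 + -((k : ℤ) - j - 1) = 2 * j := by ring
      rw [hexp]
      rw [hzt, hωdef, ← Complex.exp_int_mul, ← Complex.exp_int_mul]
      congr 1
      push_cast
      ring
    rw [mul_assoc, hpow, hF]
  -- weighted sums
  have hsum : ∀ j₀ ∈ s, ∑ m ∈ Finset.range N, R m * ω ^ (-j₀ * m) = N * F j₀ := by
    intro j₀ hj₀
    have : ∀ m ∈ Finset.range N, R m * ω ^ (-j₀ * m)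
        = ∑ j ∈ s, F j * ω ^ ((j - j₀) * m) := by
      intro m _
      rw [hRrep m, Finset.sum_mul]
      refine Finset.sum_congr rfl fun j hj => ?_
      rw [mul_assoc, ← zpow_add₀ hωne]
      congr 2
      ring
    rw [Finset.sum_congr rfl this, Finset.sum_comm]
    rw [Finset.sum_eq_single j₀]
    · simp [sub_self, mul_comm]
    · intro j hj hjne
      rw [← Finset.mul_sum]
      have ht : j - j₀ ≠ 0 := sub_ne_zero.mpr hjne
      rw [hs, Finset.mem_Icc] at hj hj₀
      have htN : (j - j₀).natAbs < N := by omega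
      rw [hgeom _ ht htN, mul_zero]
    · intro h; exact absurd hj₀ h
  -- realness of R m
  have hRreal : ∀ m : ℕ, R m = ((R m).re : ℂ) := by
    intro m
    rw [eq_comm, ← Complex.conj_eq_iff_re]
    rw [hRrep m, map_sum]
    have hconjωbase : starRingEnd ℂ ω = ω⁻¹ := by
      rw [hωdef, ← Complex.exp_conj, ← Complex.exp_neg]
      congr 1
      simp [map_div₀, Complex.conj_I, map_ofNat]
      ring
    have hconjω : ∀ t : ℤ, starRingEnd ℂ (ω ^ t) = ω ^ (-t) := by
      intro t
      rw [map_zpow₀, hconjωbase, inv_zpow, ← zpow_neg]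
    have hconjF : ∀ j : ℤ, starRingEnd ℂ (F j) = F (-j) := by
      intro j
      rw [hF]
      simp only [map_mul, ← hreal, map_intCast]
      congr 2
      push_cast
      ring
    calc ∑ j ∈ s, starRingEnd ℂ (F j * ω ^ (j * m))
        = ∑ j ∈ s, F (-j) * ω ^ (-j * m) := by
          refine Finset.sum_congr rfl fun j _ => ?_
          rw [map_mul, hconjF, hconjω]
          congr 1
          ring
      _ = ∑ j ∈ s, F j * ω ^ (j * m) := by
          refine Finset.sum_equiv (Equiv.neg ℤ) ?_ ?_
          · intro j; simp [hs, Finset.mem_Icc]; omega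
          · intro j _; simp
  -- value of the plain sum
  have h0mem : (0:ℤ) ∈ s := by simp [hs, Finset.mem_Icc]; omega
  have hsum0 : ∑ m ∈ Finset.range N, R m = (N : ℂ) * F 0 := by
    have := hsum 0 h0mem
    simpa using this
  have hF0 : F 0 = C 0 * ((k : ℂ) * k) := by rw [hF]; push_cast; ring
  have hsum0re : ∑ m ∈ Finset.range N, (R m).re = (N : ℝ) * ((k:ℝ) * k * (C 0).re) := by
    have h2 : ((N : ℂ) * (C 0 * ((k : ℂ) * k))) = (((N : ℝ) * ((k:ℝ) * k) : ℝ) : ℂ) * C 0 := by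
      push_cast; ring
    have := congrArg Complex.re hsum0
    rw [Complex.re_sum] at this
    rw [this, hF0, h2, Complex.re_ofReal_mul]
    ring
  have hC0 : 0 ≤ (C 0).re := by
    have h1 : 0 ≤ ∑ m ∈ Finset.range N, (R m).re :=
      Finset.sum_nonneg fun m _ => hRre m
    rw [hsum0re] at h1
    have hkpos : (0:ℝ) < (N : ℝ) * ((k:ℝ) * k) := by positivity
    nlinarith
  -- strict positivity
  have hC0pos : 0 < (C 0).re := by
    rcases lt_or_eq_of_le hC0 with h | h
    · exact h
    have hC0eq : C 0 = 0 := by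
      have : starRingEnd ℂ (C 0) = C 0 := by
        have := hreal 0; rw [neg_zero] at this; exact this.symm
      rw [Complex.conj_eq_iff_im] at this
      exact Complex.ext (by rw [← h]; rfl) (by simpa using this)
    have hRzero : ∀ m ∈ Finset.range N, R m = 0 := by
      have hz : ∑ m ∈ Finset.range N, (R m).re = 0 := by
        rw [hsum0re, hC0eq]; simp
      have := (Finset.sum_eq_zero_iff_of_nonneg (fun m _ => hRre m)).mp hz
      intro m hm
      rw [hRreal m, this m hm]
      simp
    have hFzero : ∀ j ∈ s, C j = 0 := by
      intro j hj
      have h1 := hsum j hj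
      rw [Finset.sum_eq_zero (fun m hm => by rw [hRzero m hm, zero_mul])] at h1
      have hNne : (N : ℂ) ≠ 0 := by exact_mod_cast Nat.cast_ne_zero.mpr hN0.ne'
      have hFj : F j = 0 := (mul_eq_zero.mp h1.symm).resolve_left hNne
      rw [hF] at hFj
      rcases mul_eq_zero.mp hFj with h2 | h2
      · exact h2
      · exfalso
        rw [hs, Finset.mem_Icc] at hj
        have : (((k : ℤ) + j) * ((k : ℤ) - j) : ℤ) = 0 := by exact_mod_cast h2
        have h3 : (0:ℤ) < ((k : ℤ) + j) * ((k : ℤ) - j) := by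
          apply mul_pos <;> omega
        omega
    obtain ⟨z, hz⟩ := hne
    exact absurd (Finset.sum_eq_zero fun j hj => by rw [hFzero j hj, zero_mul, zero_mul]) hz
  refine ⟨hC0pos, fun j hjne hjle => ?_⟩
  have hjmem : j ∈ s := by rw [hs, Finset.mem_Icc]; rw [abs_le] at hjle; omega
  have hjabs : 1 ≤ |j| := by
    rcases hjne.lt_or_gt with h | h
    · rw [abs_of_neg h]; omega
    · rw [abs_of_pos h]; omega
  have hk2 : 2 ≤ k := by rw [abs_le] at hjle; omega
  have hjR : |(j : ℝ)| ≤ (k : ℝ) - 1 := by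
    have : ((|j| : ℤ) : ℝ) ≤ (((k:ℤ) - 1 : ℤ) : ℝ) := by exact_mod_cast hjle
    push_cast at this
    simpa using this
  have hjR1 : 1 ≤ |(j : ℝ)| := by
    have : ((1:ℤ) : ℝ) ≤ ((|j| : ℤ) : ℝ) := by exact_mod_cast hjabs
    push_cast at this
    simpa using this
  have hkj : (0:ℝ) < (k : ℝ) ^ 2 - (j : ℝ) ^ 2 := by
    have h1 : (j:ℝ) ^ 2 ≤ ((k:ℝ) - 1) ^ 2 := by
      rw [← _root_.sq_abs]
      apply pow_le_pow_left₀ (abs_nonneg _) hjR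
    have hk1 : (1:ℝ) ≤ (k:ℝ) := by exact_mod_cast hk
    nlinarith
  -- the key estimate
  have hkey : ‖C j‖ * ((k : ℝ) ^ 2 - (j : ℝ) ^ 2) ≤ (k:ℝ)^2 * (C 0).re := by
    have h1 := hsum j hjmem
    have hlhs : ‖(N : ℂ) * F j‖
        = (N : ℝ) * (‖C j‖ * ((k : ℝ) ^ 2 - (j : ℝ) ^ 2)) := by
      rw [norm_mul, norm_mul]
      have hA : ‖((((k : ℤ) + j) * ((k : ℤ) - j) : ℤ) : ℂ)‖
          = (k : ℝ) ^ 2 - (j : ℝ) ^ 2 := by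
        rw [Complex.norm_intCast]
        rw [hs, Finset.mem_Icc] at hjmem
        have h3 : (0:ℤ) ≤ ((k : ℤ) + j) * ((k : ℤ) - j) :=
          le_of_lt (mul_pos (by omega) (by omega))
        rw [_root_.abs_of_nonneg (show (0:ℝ) ≤ ((((k:ℤ)+j)*((k:ℤ)-j) : ℤ) : ℝ) by exact_mod_cast h3)]
        push_cast
        ring
      rw [hA, Complex.norm_natCast]
    have hrhs : ‖(N : ℂ) * F j‖ ≤ (N : ℝ) * ((k:ℝ)^2 * (C 0).re) := by
      rw [← h1]
      calc ‖∑ m ∈ Finset.range N, R m * ω ^ (-j * m)‖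
          ≤ ∑ m ∈ Finset.range N, ‖R m * ω ^ (-j * m)‖ := by
            exact norm_sum_le _ _
        _ = ∑ m ∈ Finset.range N, (R m).re := by
            refine Finset.sum_congr rfl fun m _ => ?_
            rw [norm_mul, norm_zpow, hωabs, one_zpow, mul_one, hRreal m,
              Complex.norm_real, Real.norm_eq_abs, _root_.abs_of_nonneg (hRre m)]
            simp
        _ = (N : ℝ) * ((k:ℝ)^2 * (C 0).re) := by rw [hsum0re]; ring
    rw [hlhs] at hrhs
    have hNpos : (0:ℝ) < (N:ℝ) := by exact_mod_cast hN0
    nlinarith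
  constructor
  · rw [div_mul_eq_mul_div, le_div_iff₀ hkj]
    linarith [hkey]
  · have hklt : (k:ℝ)^2 / ((k:ℝ)^2 - (j:ℝ)^2) < (k:ℝ) := by
      rw [div_lt_iff₀ hkj]
      have hkR : (2:ℝ) ≤ (k:ℝ) := by exact_mod_cast hk2
      have h1 : (j:ℝ)^2 ≤ ((k:ℝ) - 1)^2 := by
        rw [← _root_.sq_abs]; apply pow_le_pow_left₀ (abs_nonneg _) hjR
      nlinarith
    exact mul_lt_mul_of_pos_right hklt hC0pos
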